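/- Let X, Y ⊆ (−∞, 0) be uniformly discrete sets with X ≠ Y. Then the function f(w) = ∑_{x∈X} 1/(x−w)² − ∑_{y∈Y} 1/(y−w)² is analytic and bounded on the open right half plane {Re w > 0} but is not identically zero there. -/

import Mathlib

open Set Metric Complex Filter Topology

namespace Stmt18Aux

/-- The floor map `x ↦ ⌊x/c⌋` is injective on a `c`-separated set. -/
lemma injOn_floor {X : Set ℝ} {c : ℝ} (hc : 0 < c)
    (hd : ∀ x ∈ X, ∀ y ∈ X, x ≠ y → c ≤ |x - y|) :
    Set.InjOn (fun x : ℝ => ⌊x / c⌋) X := by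
  intro x hx y hy hxy
  by_contra h
  have hcle := hd x hx y hy h
  change ⌊x / c⌋ = ⌊y / c⌋ at hxy
  have hxl : c * (⌊x / c⌋ : ℝ) ≤ x := by
    rw [mul_comm, ← le_div_iff₀ hc]; exact Int.floor_le _
  have hyl : c * (⌊x / c⌋ : ℝ) ≤ y := by
    rw [mul_comm, ← le_div_iff₀ hc, hxy]; exact Int.floor_le _
  have hxu : x < c * (⌊x / c⌋ : ℝ) + c := by
    have h1 := (div_lt_iff₀ hc).mp (Int.lt_floor_add_one (x / c))
    nlinarith
  have hyu : y < c * (⌊x / c⌋ : ℝ) + c := by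
    have h1 := (div_lt_iff₀ hc).mp (hxy ▸ Int.lt_floor_add_one (y / c))
    nlinarith
  have : |x - y| < c := abs_sub_lt_iff.mpr ⟨by linarith, by linarith⟩
  linarith

lemma finite_inter_Icc {X : Set ℝ} {c : ℝ} (hc : 0 < c)
    (hd : ∀ x ∈ X, ∀ y ∈ X, x ≠ y → c ≤ |x - y|) (a b : ℝ) :
    (X ∩ Set.Icc a b).Finite := by
  apply Set.Finite.of_finite_image (f := fun x : ℝ => ⌊x / c⌋)
  · apply (Set.finite_Icc ⌊a / c⌋ ⌊b / c⌋).subset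
    rintro n ⟨x, ⟨hxX, hx1, hx2⟩, rfl⟩
    exact ⟨Int.floor_le_floor (by gcongr), Int.floor_le_floor (by gcongr)⟩
  · exact (injOn_floor hc hd).mono Set.inter_subset_left

lemma countable_of_sep {X : Set ℝ} {c : ℝ} (hc : 0 < c)
    (hd : ∀ x ∈ X, ∀ y ∈ X, x ≠ y → c ≤ |x - y|) : X.Countable :=
  Set.countable_of_injective_of_countable_image (injOn_floor hc hd)
    (Set.to_countable _)

end Stmt18Aux

namespace Stmt18Aux

lemma summable_of_support_near {X : Set ℝ} {c : ℝ} (hc : 0 < c)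
    (hd : ∀ x ∈ X, ∀ y ∈ X, x ≠ y → c ≤ |x - y|) (hXneg : X ⊆ Set.Iio 0)
    (v : ↥X → ℝ) (R : ℝ) (hv : ∀ x : ↥X, (x : ℝ) < -R → v x = 0) : Summable v := by
  apply summable_of_finite_support
  have hfin : (X ∩ Set.Icc (-R) 0).Finite := finite_inter_Icc hc hd _ _
  have hpre : ((Subtype.val : ↥X → ℝ) ⁻¹' (X ∩ Set.Icc (-R) 0)).Finite :=
    hfin.preimage (Set.injOn_of_injective Subtype.val_injective)
  apply hpre.subset
  intro x hx
  rcases lt_or_ge (x : ℝ) (-R) with h | h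
  · exact absurd (hv x h) hx
  · exact ⟨x.2, h, le_of_lt (hXneg x.2)⟩

set_option maxHeartbeats 1000000 in
lemma summable_inv_sq {X : Set ℝ} {c : ℝ} (hc : 0 < c)
    (hd : ∀ x ∈ X, ∀ y ∈ X, x ≠ y → c ≤ |x - y|) (hXneg : X ⊆ Set.Iio 0) :
    Summable (fun x : ↥X => 1 / (x : ℝ) ^ 2) := by
  set ψ : ↥X → ℕ := fun x => (-⌊(x : ℝ) / c⌋ - 1).toNat with hψ
  have hfl : ∀ x : ↥X, ⌊(x : ℝ) / c⌋ ≤ -1 := by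
    intro x
    have : (x : ℝ) / c < 0 := div_neg_of_neg_of_pos (hXneg x.2) hc
    have h0 : ⌊(x : ℝ) / c⌋ < 0 := Int.floor_lt.mpr (by simpa using this)
    omega
  have hψinj : Function.Injective ψ := by
    intro x y hxy
    have hx := hfl x; have hy := hfl y
    have : ⌊(x : ℝ) / c⌋ = ⌊(y : ℝ) / c⌋ := by
      have := congrArg (fun n : ℕ => (n : ℤ)) hxy
      simp only [hψ, Int.toNat_of_nonneg (by omega : (0:ℤ) ≤ -⌊(x : ℝ) / c⌋ - 1),
        Int.toNat_of_nonneg (by omega : (0:ℤ) ≤ -⌊(y : ℝ) / c⌋ - 1)] at this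
      omega
    exact Subtype.ext (injOn_floor hc hd x.2 y.2 this)
  have hkey : ∀ x : ↥X, c * (ψ x : ℝ) < -(x : ℝ) := by
    intro x
    have h1 := (div_lt_iff₀ hc).mp (Int.lt_floor_add_one ((x : ℝ) / c))
    have h2 : ((ψ x : ℕ) : ℝ) = -(⌊(x : ℝ) / c⌋ : ℝ) - 1 := by
      have hfx := hfl x
      have h3 : ((ψ x : ℕ) : ℤ) = -⌊(x : ℝ) / c⌋ - 1 :=
        Int.toNat_of_nonneg (by omega : (0:ℤ) ≤ -⌊(x : ℝ) / c⌋ - 1)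
      exact_mod_cast congrArg (fun n : ℤ => (n : ℝ)) h3
    rw [h2]; nlinarith
  have hh : Summable (fun n : ℕ => 1 / (c * (n : ℝ)) ^ 2) := by
    have h1 : Summable (fun n : ℕ => ((n : ℝ) ^ 2)⁻¹) := by
      simpa [one_div] using Real.summable_one_div_nat_pow.mpr one_lt_two
    have h2 := h1.mul_left ((c ^ 2)⁻¹)
    refine h2.congr fun n => ?_
    rw [mul_pow, one_div, mul_inv]
  set v : ↥X → ℝ := fun x => if ψ x = 0 then 1 / (x : ℝ) ^ 2 else 0 with hv
  have hvsum : Summable v := by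
    apply summable_of_support_near hc hd hXneg v (2 * c)
    intro x hx
    rw [hv]
    simp only [ite_eq_right_iff]
    intro h0
    exfalso
    have h2 : ⌊(x : ℝ) / c⌋ ≤ -2 := by
      have : (x : ℝ) / c ≤ -2 := by
        rw [div_le_iff₀ hc]; nlinarith
      calc ⌊(x : ℝ) / c⌋ ≤ ⌊(-2 : ℝ)⌋ := Int.floor_le_floor this
        _ = -2 := by norm_num
    have : ψ x ≠ 0 := by
      rw [hψ]; simp only []
      omega
    exact this h0
  refine Summable.of_nonneg_of_le (fun x => by positivity) ?_
    ((hh.comp_injective hψinj).add hvsum)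
  intro x
  have hx0 : (x : ℝ) < 0 := hXneg x.2
  simp only [Function.comp_apply]
  by_cases h0 : ψ x = 0
  · rw [hv]
    simp only [h0, Nat.cast_zero, mul_zero, if_true, ite_true, eq_self_iff_true]
    norm_num
  · have hψpos : 0 < (ψ x : ℝ) := by
      have : 0 < ψ x := Nat.pos_of_ne_zero h0
      exact_mod_cast this
    have hk := hkey x
    have h1 : (c * (ψ x : ℝ)) ^ 2 ≤ (x : ℝ) ^ 2 := by nlinarith [mul_pos hc hψpos]
    have h2 : 1 / (x : ℝ) ^ 2 ≤ 1 / (c * (ψ x : ℝ)) ^ 2 :=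
      one_div_le_one_div_of_le (by positivity) h1
    have hv0 : 0 ≤ v x := by rw [hv]; dsimp only; positivity
    linarith

end Stmt18Aux

namespace Stmt18Aux

lemma re_le_dist (p : ℝ) (w : ℂ) : |p - w.re| ≤ dist ((p : ℂ)) w := by
  have h := Complex.abs_re_le_norm ((p : ℂ) - w)
  rw [Complex.dist_eq]
  simpa using h

lemma im_le_dist (p : ℝ) (w : ℂ) : |w.im| ≤ dist ((p : ℂ)) w := by
  have h := Complex.abs_im_le_norm ((p : ℂ) - w)
  rw [Complex.dist_eq]
  simpa using h

lemma norm_term (x : ℝ) (w : ℂ) :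
    ‖1 / ((x : ℂ) - w) ^ 2‖ = 1 / dist ((x : ℂ)) w ^ 2 := by
  rw [norm_div, norm_pow, norm_one, Complex.dist_eq]

/-- Master pointwise bound for the terms of the series on a ball. -/
lemma core_bound {X : Set ℝ} {c : ℝ} (hc : 0 < c)
    (hd : ∀ x ∈ X, ∀ y ∈ X, x ≠ y → c ≤ |x - y|) (hXneg : X ⊆ Set.Iio 0)
    (z₀ : ℂ) (r : ℝ) (hr : 0 < r) :
    ∃ u : ↥X → ℝ, Summable u ∧ (∀ x, 0 ≤ u x) ∧
      ∀ (x : ↥X) (w : ℂ), dist w z₀ < r → 2 * r ≤ dist (((x : ℝ) : ℂ)) z₀ →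
        ‖1 / (((x : ℝ) : ℂ) - w) ^ 2‖ ≤ u x := by
  set R : ℝ := 2 * (|z₀.re| + r) + 1 with hR
  refine ⟨fun x => 4 / (x : ℝ) ^ 2 + (if -R ≤ (x : ℝ) then 1 / r ^ 2 else 0), ?_, ?_, ?_⟩
  · apply Summable.add
    · have h1 := (summable_inv_sq hc hd hXneg).mul_left 4
      refine h1.congr fun x => ?_
      ring
    · apply summable_of_support_near hc hd hXneg _ R
      intro x hx
      rw [if_neg (by linarith)]
  · intro x
    have : (0:ℝ) ≤ if -R ≤ (x : ℝ) then 1 / r ^ 2 else 0 := by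
      split <;> positivity
    positivity
  · intro x w hw hdist
    have hx0 : (x : ℝ) < 0 := hXneg x.2
    rw [norm_term]
    by_cases hcase : (x : ℝ) ≤ -R
    · -- far case
      have hwre : |w.re| ≤ |z₀.re| + r := by
        have h1 : |w.re - z₀.re| ≤ dist w z₀ := by
          have := Complex.abs_re_le_norm (w - z₀)
          rw [Complex.dist_eq]
          simpa using this
        have := abs_sub_abs_le_abs_sub w.re z₀.re
        linarith [abs_nonneg (w.re - z₀.re)]
      have hRx : 2 * (|z₀.re| + r) + 1 ≤ -(x : ℝ) := by linarith
      have h2 : -(x : ℝ) / 2 ≤ |(x : ℝ) - w.re| := by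
        have h3 : -(x : ℝ) - |w.re| ≤ |(x : ℝ)| - |w.re| := by
          rw [abs_of_neg hx0]
        have h4 := abs_sub_abs_le_abs_sub (x : ℝ) w.re
        have h5 : 0 ≤ |z₀.re| + r := by positivity
        linarith
      have h6 : -(x : ℝ) / 2 ≤ dist (((x : ℝ) : ℂ)) w := le_trans h2 (re_le_dist _ _)
      have h7 : 0 < -(x : ℝ) / 2 := by nlinarith [abs_nonneg z₀.re]
      have h8 : 1 / dist (((x : ℝ) : ℂ)) w ^ 2 ≤ 1 / (-(x : ℝ) / 2) ^ 2 :=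
        one_div_le_one_div_of_le (by positivity) (by nlinarith)
      have h9 : 1 / (-(x : ℝ) / 2) ^ 2 = 4 / (x : ℝ) ^ 2 := by
        rw [div_pow]; rw [neg_pow]; ring_nf
      have h10 : (0:ℝ) ≤ if -R ≤ (x : ℝ) then 1 / r ^ 2 else 0 := by split <;> positivity
      calc 1 / dist (((x : ℝ) : ℂ)) w ^ 2 ≤ 1 / (-(x : ℝ) / 2) ^ 2 := h8
        _ = 4 / (x : ℝ) ^ 2 := h9
        _ ≤ _ := by linarith
  -- near case
    · have h1 : r ≤ dist (((x : ℝ) : ℂ)) w := by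
        have := dist_triangle (((x : ℝ) : ℂ)) w z₀
        have h2 : dist w z₀ = dist z₀ w := dist_comm _ _
        calc r = 2 * r - r := by ring
          _ ≤ dist (((x : ℝ) : ℂ)) z₀ - dist w z₀ := by linarith
          _ ≤ dist (((x : ℝ) : ℂ)) w := by
              have := dist_triangle (((x : ℝ) : ℂ)) w z₀
              linarith
      have h2 : 1 / dist (((x : ℝ) : ℂ)) w ^ 2 ≤ 1 / r ^ 2 :=
        one_div_le_one_div_of_le (by positivity) (by nlinarith)
      dsimp only
      rw [if_pos (show -R ≤ (x:ℝ) by linarith)]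
      have : (0:ℝ) ≤ 4 / (x : ℝ) ^ 2 := by positivity
      linarith

end Stmt18Aux

namespace Stmt18Aux

lemma summable_norm {X : Set ℝ} {c : ℝ} (hc : 0 < c)
    (hd : ∀ x ∈ X, ∀ y ∈ X, x ≠ y → c ≤ |x - y|) (hXneg : X ⊆ Set.Iio 0)
    (w : ℂ) : Summable (fun x : ↥X => ‖1 / (((x : ℝ) : ℂ) - w) ^ 2‖) := by
  obtain ⟨u, hu, hu0, hub⟩ := core_bound hc hd hXneg w 1 one_pos
  set v : ↥X → ℝ := fun x => if dist (((x : ℝ) : ℂ)) w < 2 then ‖1 / (((x : ℝ) : ℂ) - w) ^ 2‖ else 0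
    with hv
  have hvsum : Summable v := by
    apply summable_of_support_near hc hd hXneg v (2 + |w.re|)
    intro x hx
    rw [hv]
    dsimp only
    rw [if_neg]
    push_neg
    refine le_trans ?_ (re_le_dist _ _)
    have h1 : 2 + |w.re| ≤ -(x : ℝ) := by linarith
    have h2 : -(x:ℝ) - |w.re| ≤ |(x : ℝ) - w.re| := by
      have h4 := abs_sub_abs_le_abs_sub (x : ℝ) w.re
      have : -(x:ℝ) ≤ |(x:ℝ)| := neg_le_abs _
      linarith [le_abs_self (x:ℝ), neg_abs_le (x:ℝ)]
    linarith
  refine Summable.of_nonneg_of_le (fun x => norm_nonneg _) ?_ (hu.add hvsum)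
  intro x
  by_cases hx : dist (((x : ℝ) : ℂ)) w < 2
  · have : v x = ‖1 / (((x : ℝ) : ℂ) - w) ^ 2‖ := by rw [hv]; exact if_pos hx
    linarith [hu0 x, this.ge]
  · have h1 := hub x w (by simpa using one_pos) (by push_neg at hx; linarith)
    have : v x = 0 := by rw [hv]; exact if_neg hx
    linarith [this.ge]

lemma summable_term {X : Set ℝ} {c : ℝ} (hc : 0 < c)
    (hd : ∀ x ∈ X, ∀ y ∈ X, x ≠ y → c ≤ |x - y|) (hXneg : X ⊆ Set.Iio 0)
    (w : ℂ) : Summable (fun x : ↥X => 1 / (((x : ℝ) : ℂ) - w) ^ 2) :=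
  (summable_norm hc hd hXneg w).of_norm

lemma diff_on_ball {X : Set ℝ} {c : ℝ} (hc : 0 < c)
    (hd : ∀ x ∈ X, ∀ y ∈ X, x ≠ y → c ≤ |x - y|) (hXneg : X ⊆ Set.Iio 0)
    (z₀ : ℂ) (r : ℝ) (hr : 0 < r)
    (hsep : ∀ x ∈ X, 2 * r ≤ dist ((x : ℂ)) z₀) :
    DifferentiableOn ℂ (fun w => ∑' x : ↥X, 1 / (((x : ℝ) : ℂ) - w) ^ 2)
      (Metric.ball z₀ r) := by
  obtain ⟨u, hu, hu0, hub⟩ := core_bound hc hd hXneg z₀ r hr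
  have ht : TendstoUniformlyOn
      (fun (t : Finset ↥X) w => ∑ x ∈ t, 1 / (((x : ℝ) : ℂ) - w) ^ 2)
      (fun w => ∑' x : ↥X, 1 / (((x : ℝ) : ℂ) - w) ^ 2) atTop (Metric.ball z₀ r) :=
    tendstoUniformlyOn_tsum hu fun x w hw =>
      hub x w (Metric.mem_ball.mp hw) (hsep x x.2)
  apply ht.tendstoLocallyUniformlyOn.differentiableOn ?_ Metric.isOpen_ball
  apply Filter.Eventually.of_forall
  intro t
  apply DifferentiableOn.fun_sum
  intro x _
  intro w hw
  apply DifferentiableAt.differentiableWithinAt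
  have hne : ((x : ℝ) : ℂ) - w ≠ 0 := by
    intro h
    have : dist (((x : ℝ) : ℂ)) w = 0 := by
      rw [Complex.dist_eq, h]; simp
    have h1 := hsep x x.2
    have h2 := Metric.mem_ball.mp hw
    have h3 := dist_triangle (((x : ℝ) : ℂ)) w z₀
    rw [this] at h3
    
    linarith
  exact (differentiableAt_const (1:ℂ)).div
    (((differentiableAt_const _).sub differentiableAt_id).pow 2) (pow_ne_zero 2 hne)

end Stmt18Aux

namespace Stmt18Aux

lemma gap_real (S : Set ℝ) (hfin : ∀ a b : ℝ, (S ∩ Set.Icc a b).Finite)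
    (z : ℝ) (hz : z ∉ S) : ∃ r : ℝ, 0 < r ∧ ∀ p ∈ S, 2 * r ≤ |p - z| := by
  have hT : (S ∩ Set.Icc (z - 1) (z + 1)).Finite := hfin _ _
  have key : ∀ p ∈ S, p ∉ Set.Icc (z - 1) (z + 1) → 1 ≤ |p - z| := by
    intro p _ hp
    rw [Set.mem_Icc] at hp
    push_neg at hp
    rcases le_or_gt (z - 1) p with h | h
    · have := hp h
      rw [abs_sub_comm, abs_of_neg (by linarith)]
      linarith
    · rw [abs_of_neg (by linarith)]
      linarith
  by_cases hF : (hT.toFinset).Nonempty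
  · set d := (hT.toFinset).inf' hF (fun p => |p - z|) with hdd
    have hd0 : 0 < d := by
      rw [hdd, Finset.lt_inf'_iff]
      intro p hp
      have hpS : p ∈ S := (hT.mem_toFinset.mp hp).1
      have : p ≠ z := fun h => hz (h ▸ hpS)
      have : p - z ≠ 0 := sub_ne_zero.mpr this
      exact abs_pos.mpr this
    refine ⟨min d 1 / 2, by positivity, fun p hp => ?_⟩
    have h2 : 2 * (min d 1 / 2) = min d 1 := by ring
    rw [h2]
    by_cases hpT : p ∈ Set.Icc (z - 1) (z + 1)
    · exact le_trans (min_le_left _ _) (Finset.inf'_le _ (hT.mem_toFinset.mpr ⟨hp, hpT⟩))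
    · exact le_trans (min_le_right _ _) (key p hp hpT)
  · refine ⟨1 / 2, by norm_num, fun p hp => ?_⟩
    have hpT : p ∉ Set.Icc (z - 1) (z + 1) := by
      intro h
      exact hF ⟨p, hT.mem_toFinset.mpr ⟨hp, h⟩⟩
    have := key p hp hpT
    linarith

lemma gap_complex (S : Set ℝ) (hfin : ∀ a b : ℝ, (S ∩ Set.Icc a b).Finite)
    (w₀ : ℂ) (hw₀ : ∀ p ∈ S, (p : ℂ) ≠ w₀) :
    ∃ r : ℝ, 0 < r ∧ ∀ p ∈ S, 2 * r ≤ dist ((p : ℂ)) w₀ := by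
  by_cases him : w₀.im = 0
  · have hre : w₀ = ((w₀.re : ℝ) : ℂ) := by
      apply Complex.ext <;> simp [him]
    have hz : w₀.re ∉ S := by
      intro h
      exact hw₀ _ h hre.symm
    obtain ⟨r, hr, hgap⟩ := gap_real S hfin w₀.re hz
    refine ⟨r, hr, fun p hp => ?_⟩
    exact le_trans (hgap p hp) (re_le_dist p w₀)
  · refine ⟨|w₀.im| / 2, by positivity, fun p hp => ?_⟩
    have := im_le_dist p w₀
    linarith

end Stmt18Aux

namespace Stmt18Aux

lemma dist_coe_coe (p q : ℝ) : dist ((p : ℂ)) ((q : ℂ)) = |p - q| := by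
  rw [Complex.dist_eq, ← Complex.ofReal_sub, Complex.norm_real, Real.norm_eq_abs]

lemma final {X Y : Set ℝ} {cX cY : ℝ}
    (hXneg : X ⊆ Set.Iio 0) (hYneg : Y ⊆ Set.Iio 0)
    (hcX : 0 < cX) (hdX : ∀ x ∈ X, ∀ y ∈ X, x ≠ y → cX ≤ |x - y|)
    (hcY : 0 < cY) (hdY : ∀ x ∈ Y, ∀ y ∈ Y, x ≠ y → cY ≤ |x - y|)
    (a : ℝ) (haX : a ∈ X) (haY : a ∉ Y)
    (hzero : ∀ w : ℂ, w.im ≠ 0 →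
      (∑' x : ↥X, 1 / (((x : ℝ) : ℂ) - w) ^ 2) -
        (∑' y : ↥Y, 1 / (((y : ℝ) : ℂ) - w) ^ 2) = 0) :
    False := by
  have hfin : ∀ u v : ℝ, (((X ∪ Y) \ {a}) ∩ Set.Icc u v).Finite := by
    intro u v
    apply ((finite_inter_Icc hcX hdX u v).union (finite_inter_Icc hcY hdY u v)).subset
    rintro p ⟨⟨hmem, -⟩, hicc⟩
    rcases hmem with h | h
    · exact Or.inl ⟨h, hicc⟩
    · exact Or.inr ⟨h, hicc⟩
  have haz : a ∉ (X ∪ Y) \ {a} := fun h => h.2 rfl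
  obtain ⟨r, hr, hgap⟩ := gap_real ((X ∪ Y) \ {a}) hfin a haz
  obtain ⟨uX, huX, huX0, hubX⟩ := core_bound hcX hdX hXneg ((a : ℂ)) r hr
  obtain ⟨uY, huY, huY0, hubY⟩ := core_bound hcY hdY hYneg ((a : ℂ)) r hr
  set B : ℝ := (∑' x, uX x) + ∑' y, uY y with hB
  have hB0 : 0 ≤ B := add_nonneg (tsum_nonneg huX0) (tsum_nonneg huY0)
  set ε : ℝ := min (r / 2) (1 / (B + 1)) with hε
  have hε0 : 0 < ε := lt_min (by positivity) (by positivity)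
  set w₁ : ℂ := (a : ℂ) + (ε : ℂ) * Complex.I with hw₁
  have him : w₁.im = ε := by simp [hw₁]
  have hdistw : dist w₁ ((a : ℂ)) = ε := by
    have h1 : w₁ - (a : ℂ) = (ε : ℂ) * Complex.I := by rw [hw₁]; ring
    rw [Complex.dist_eq, h1, norm_mul, Complex.norm_I, Complex.norm_real, Real.norm_eq_abs, mul_one,
      abs_of_pos hε0]
  have hwball : dist w₁ ((a : ℂ)) < r := by
    rw [hdistw]
    calc ε ≤ r / 2 := min_le_left _ _
      _ < r := by linarith
  -- distance bounds for points other than a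
  have hdX2 : ∀ x : ↥X, (x : ℝ) ≠ a → 2 * r ≤ dist (((x : ℝ) : ℂ)) ((a : ℂ)) := by
    intro x hx
    rw [dist_coe_coe]
    exact hgap _ ⟨Or.inl x.2, hx⟩
  have hdY2 : ∀ y : ↥Y, 2 * r ≤ dist (((y : ℝ) : ℂ)) ((a : ℂ)) := by
    intro y
    rw [dist_coe_coe]
    exact hgap _ ⟨Or.inr y.2, fun h => haY (h ▸ y.2)⟩
  -- bound the Y series
  have hYb : ‖∑' y : ↥Y, 1 / (((y : ℝ) : ℂ) - w₁) ^ 2‖ ≤ ∑' y, uY y := by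
    refine le_trans (norm_tsum_le_tsum_norm (summable_norm hcY hdY hYneg w₁)) ?_
    exact Summable.tsum_le_tsum (fun y => hubY y w₁ hwball (hdY2 y))
      (summable_norm hcY hdY hYneg w₁) huY
  -- split the X series
  classical
  set b : ↥X := ⟨a, haX⟩ with hb
  have hsplit := Summable.tsum_eq_add_tsum_ite (summable_term hcX hdX hXneg w₁) b
  set sX : ↥X → ℂ := fun x => if x = b then 0 else 1 / (((x : ℝ) : ℂ) - w₁) ^ 2 with hsX
  have hXb : ‖∑' x, sX x‖ ≤ ∑' x, uX x := by
    have hbnd : ∀ x : ↥X, ‖sX x‖ ≤ uX x := by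
      intro x
      rw [hsX]
      by_cases hx : x = b
      · simp only [hx, if_pos, if_true, eq_self_iff_true, ite_true]
        simpa using huX0 b
      · dsimp only
        rw [if_neg hx]
        refine hubX x w₁ hwball (hdX2 x ?_)
        intro h
        exact hx (Subtype.ext h)
    have hs : Summable fun x => ‖sX x‖ :=
      Summable.of_nonneg_of_le (fun x => norm_nonneg _) hbnd huX
    exact le_trans (norm_tsum_le_tsum_norm hs) (Summable.tsum_le_tsum hbnd hs huX)
  -- the main term
  have hmain : ‖1 / (((a : ℝ) : ℂ) - w₁) ^ 2‖ = 1 / ε ^ 2 := by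
    rw [norm_term, dist_comm, hdistw]
  -- conclude
  have h0 := hzero w₁ (by rw [him]; exact ne_of_gt hε0)
  have heq : (1 : ℂ) / (((a : ℝ) : ℂ) - w₁) ^ 2 =
      (∑' y : ↥Y, 1 / (((y : ℝ) : ℂ) - w₁) ^ 2) - ∑' x, sX x := by
    have h1 : (∑' x : ↥X, 1 / (((x : ℝ) : ℂ) - w₁) ^ 2) =
        ∑' y : ↥Y, 1 / (((y : ℝ) : ℂ) - w₁) ^ 2 := by
      have := hzero w₁ (by rw [him]; exact ne_of_gt hε0)
      linear_combination this
    rw [← h1, hsplit, show (((b : ℝ)) : ℂ) = (a : ℂ) from rfl]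
    ring_nf
  have hle : 1 / ε ^ 2 ≤ B := by
    rw [← hmain, heq]
    calc ‖(∑' y : ↥Y, 1 / (((y : ℝ) : ℂ) - w₁) ^ 2) - ∑' x, sX x‖
        ≤ ‖∑' y : ↥Y, 1 / (((y : ℝ) : ℂ) - w₁) ^ 2‖ + ‖∑' x, sX x‖ := norm_sub_le _ _
      _ ≤ (∑' y, uY y) + ∑' x, uX x := add_le_add hYb hXb
      _ = B := by rw [hB]; ring
  have hεle : ε ≤ 1 / (B + 1) := min_le_right _ _
  have h1ε : B + 1 ≤ 1 / ε := by
    rw [le_div_iff₀ hε0]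
    calc (B + 1) * ε ≤ (B + 1) * (1 / (B + 1)) := by
          apply mul_le_mul_of_nonneg_left hεle (by linarith)
      _ = 1 := by field_simp
  have h2ε : B + 1 ≤ 1 / ε ^ 2 := by
    have hinv : 0 < 1 / ε := by positivity
    have : (B + 1) ≤ (1 / ε) ^ 2 := by nlinarith
    calc B + 1 ≤ (1 / ε) ^ 2 := this
      _ = 1 / ε ^ 2 := by rw [div_pow, one_pow]
  linarith

end Stmt18Aux


open Stmt18Aux

/-- For distinct uniformly discrete sets `X, Y ⊆ (-∞, 0)`, the difference of their
Coulomb force fields is analytic and bounded on the open right half plane, but not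
identically zero there. -/
theorem stmt_18 (X Y : Set ℝ)
    (hXneg : X ⊆ Set.Iio 0) (hYneg : Y ⊆ Set.Iio 0)
    (cX : ℝ) (hcX : 0 < cX) (hdiscX : ∀ x ∈ X, ∀ y ∈ X, x ≠ y → cX ≤ |x - y|)
    (cY : ℝ) (hcY : 0 < cY) (hdiscY : ∀ x ∈ Y, ∀ y ∈ Y, x ≠ y → cY ≤ |x - y|)
    (hne : X ≠ Y)
    (f : ℂ → ℂ)
    (hf : ∀ w : ℂ, f w =
      (∑' x : X, 1 / (((x : ℝ) : ℂ) - w) ^ 2) - ∑' y : Y, 1 / (((y : ℝ) : ℂ) - w) ^ 2) :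
    DifferentiableOn ℂ f {w : ℂ | 0 < w.re} ∧
      (∃ M : ℝ, ∀ w : ℂ, 0 < w.re → ‖f w‖ ≤ M) ∧
      ¬ (∀ w : ℂ, 0 < w.re → f w = 0) := by
  classical
  -- Part 1 : differentiability
  have hdiff : DifferentiableOn ℂ f {w : ℂ | 0 < w.re} := by
    intro w hw
    have hwre : 0 < w.re := hw
    set r : ℝ := w.re / 2 with hrdef
    have hr : 0 < r := by rw [hrdef]; linarith
    have hsepX : ∀ x ∈ X, 2 * r ≤ dist ((x : ℂ)) w := by
      intro x hx
      have hx0 : x < 0 := hXneg hx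
      refine le_trans ?_ (re_le_dist x w)
      rw [abs_of_neg (by linarith : x - w.re < 0)]
      rw [hrdef]; linarith
    have hsepY : ∀ y ∈ Y, 2 * r ≤ dist ((y : ℂ)) w := by
      intro y hy
      have hy0 : y < 0 := hYneg hy
      refine le_trans ?_ (re_le_dist y w)
      rw [abs_of_neg (by linarith : y - w.re < 0)]
      rw [hrdef]; linarith
    have dX := diff_on_ball hcX hdiscX hXneg w r hr hsepX
    have dY := diff_on_ball hcY hdiscY hYneg w r hr hsepY
    have hfball : DifferentiableOn ℂ f (Metric.ball w r) :=
      (dX.sub dY).congr (fun z _ => hf z)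
    exact (hfball.differentiableAt
      (Metric.isOpen_ball.mem_nhds (Metric.mem_ball_self hr))).differentiableWithinAt
  -- Part 2 : boundedness
  have htsum_bound : ∀ (Z : Set ℝ) (cZ : ℝ), 0 < cZ →
      (∀ x ∈ Z, ∀ y ∈ Z, x ≠ y → cZ ≤ |x - y|) → Z ⊆ Set.Iio 0 →
      ∀ w : ℂ, 0 < w.re →
      ‖∑' x : ↥Z, 1 / (((x : ℝ) : ℂ) - w) ^ 2‖ ≤ ∑' x : ↥Z, 1 / (x : ℝ) ^ 2 := by
    intro Z cZ hcZ hdZ hZneg w hw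
    refine le_trans (norm_tsum_le_tsum_norm (summable_norm hcZ hdZ hZneg w)) ?_
    refine Summable.tsum_le_tsum ?_ (summable_norm hcZ hdZ hZneg w) (summable_inv_sq hcZ hdZ hZneg)
    intro x
    rw [norm_term]
    have hx0 : (x : ℝ) < 0 := hZneg x.2
    have h1 : -(x : ℝ) ≤ dist (((x : ℝ) : ℂ)) w := by
      refine le_trans ?_ (re_le_dist _ w)
      rw [abs_of_neg (by linarith : (x : ℝ) - w.re < 0)]
      linarith
    have hx2 : (0:ℝ) < (x:ℝ) ^ 2 := by nlinarith
    exact one_div_le_one_div_of_le hx2 (by nlinarith)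
  have hbound : ∃ M : ℝ, ∀ w : ℂ, 0 < w.re → ‖f w‖ ≤ M := by
    refine ⟨(∑' x : ↥X, 1 / (x : ℝ) ^ 2) + ∑' y : ↥Y, 1 / (y : ℝ) ^ 2, fun w hw => ?_⟩
    rw [hf w]
    refine le_trans (norm_sub_le _ _) ?_
    exact add_le_add (htsum_bound X cX hcX hdiscX hXneg w hw)
      (htsum_bound Y cY hcY hdiscY hYneg w hw)
  refine ⟨hdiff, hbound, ?_⟩
  -- Part 3 : not identically zero
  intro hzero
  set S : Set ℂ := (fun x : ℝ => (x : ℂ)) '' (X ∪ Y) with hS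
  have hScount : S.Countable :=
    (((countable_of_sep hcX hdiscX).union (countable_of_sep hcY hdiscY)).image _)
  have hconn : IsPreconnected Sᶜ :=
    (hScount.isPathConnected_compl_of_one_lt_rank
      (by rw [rank_real_complex]; norm_num)).isConnected.isPreconnected
  have hfinU : ∀ u v : ℝ, ((X ∪ Y) ∩ Set.Icc u v).Finite := by
    intro u v
    apply ((finite_inter_Icc hcX hdiscX u v).union (finite_inter_Icc hcY hdiscY u v)).subset
    rintro p ⟨h | h, hi⟩
    exacts [Or.inl ⟨h, hi⟩, Or.inr ⟨h, hi⟩]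
  have hanalytic : AnalyticOnNhd ℂ f Sᶜ := by
    intro w₀ hw₀
    have hw₀' : ∀ p ∈ X ∪ Y, (p : ℂ) ≠ w₀ := by
      intro p hp h
      exact hw₀ ⟨p, hp, h⟩
    obtain ⟨r, hr, hgap⟩ := gap_complex (X ∪ Y) hfinU w₀ hw₀'
    have dX := diff_on_ball hcX hdiscX hXneg w₀ r hr (fun x hx => hgap x (Or.inl hx))
    have dY := diff_on_ball hcY hdiscY hYneg w₀ r hr (fun y hy => hgap y (Or.inr hy))
    have hfball : DifferentiableOn ℂ f (Metric.ball w₀ r) :=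
      (dX.sub dY).congr (fun z _ => hf z)
    exact hfball.analyticAt (Metric.isOpen_ball.mem_nhds (Metric.mem_ball_self hr))
  have h1mem : (1 : ℂ) ∈ Sᶜ := by
    intro h
    obtain ⟨p, hp, hpe⟩ := h
    have hp0 : p < 0 := by rcases hp with h | h; exacts [hXneg h, hYneg h]
    have hpe' : (p : ℂ) = 1 := hpe
    have : p = 1 := by exact_mod_cast hpe'
    linarith
  have hev : f =ᶠ[𝓝 (1 : ℂ)] 0 := by
    filter_upwards [Metric.ball_mem_nhds (1 : ℂ) one_pos] with z hz
    apply hzero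
    have h1 : |z.re - (1 : ℂ).re| ≤ dist z 1 := by
      have := Complex.abs_re_le_norm (z - 1)
      rw [Complex.dist_eq]
      simpa using this
    have h2 : dist z 1 < 1 := Metric.mem_ball.mp hz
    have h3 := abs_lt.mp (lt_of_le_of_lt h1 h2)
    simp only [Complex.one_re] at h3
    linarith [h3.1]
  have hEq : Set.EqOn f 0 Sᶜ :=
    hanalytic.eqOn_zero_of_preconnected_of_eventuallyEq_zero hconn h1mem hev
  have hzero' : ∀ w : ℂ, w.im ≠ 0 → f w = 0 := by
    intro w hwim
    apply hEq
    intro hwS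
    obtain ⟨p, _, hpe⟩ := hwS
    apply hwim
    rw [← hpe]
    simp
  obtain ⟨a, ha⟩ : ∃ a, (a ∈ X ∧ a ∉ Y) ∨ (a ∈ Y ∧ a ∉ X) := by
    by_contra hcon
    push_neg at hcon
    apply hne
    ext t
    constructor <;> intro ht
    · exact (hcon t).1 ht
    · exact (hcon t).2 ht
  rcases ha with ⟨haX, haY⟩ | ⟨haY, haX⟩
  · exact final hXneg hYneg hcX hdiscX hcY hdiscY a haX haY
      (fun w hw => by rw [← hf w]; exact hzero' w hw)
  · refine final hYneg hXneg hcY hdiscY hcX hdiscX a haY haX (fun w hw => ?_)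
    have h0 := hzero' w hw
    rw [hf w] at h0
    linear_combination -h0
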